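/- Let V be a finite-dimensional real inner product space, p ≥ 1, let φ be an alternating p-form on V of comass at most one, and let U ⊆ V be open. Then the following are equivalent: (1) for every compact set K ⊆ U the (U,φ)-convex hull K̂ is compact, and there exist a compact set C ⊆ U and a smooth function on U ∖ C that is strictly φ-plurisubharmonic at every point of U ∖ C; (2) there exist a smooth φ-plurisubharmonic proper exhaustion function f : U → ℝ and a compact set C′ ⊆ U such that f is strictly φ-plurisubharmonic at every point of U ∖ C′. (U is then called strictly φ-convex at infinity.) -/

import Mathlib

open scoped RealInnerProductSpace

/-- `f` is smooth and `φ`-plurisubharmonic on the open set `U`: the trace of its Hessian on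
every `φ`-plane is nonnegative at every point of `U`. -/
def PshOn {V : Type*} [NormedAddCommGroup V] [InnerProductSpace ℝ V]
    {p : ℕ} (φ : V [⋀^Fin p]→ₗ[ℝ] ℝ) (U : Set V) (f : V → ℝ) : Prop :=
  ContDiffOn ℝ (⊤ : ℕ∞) f U ∧
  ∀ x ∈ U, ∀ e : Fin p → V, Orthonormal ℝ e → φ e = 1 →
    0 ≤ ∑ j, fderiv ℝ (fderiv ℝ f) x (e j) (e j)

/-- `f` is strictly `φ`-plurisubharmonic at `x`. -/
def StrictAt {V : Type*} [NormedAddCommGroup V] [InnerProductSpace ℝ V]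
    {p : ℕ} (φ : V [⋀^Fin p]→ₗ[ℝ] ℝ) (f : V → ℝ) (x : V) : Prop :=
  ∀ e : Fin p → V, Orthonormal ℝ e → φ e = 1 →
    0 < ∑ j, fderiv ℝ (fderiv ℝ f) x (e j) (e j)

/-- The `(U,φ)`-convex hull of a compact subset `K` of `U`. -/
def PshHull {V : Type*} [NormedAddCommGroup V] [InnerProductSpace ℝ V]
    {p : ℕ} (φ : V [⋀^Fin p]→ₗ[ℝ] ℝ) (U : Set V) (K : Set V) : Set V :=
  {x ∈ U | ∀ f : V → ℝ, PshOn φ U f → f x ≤ sSup (f '' K)}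


open Filter Topology
open scoped ContDiff

section Calc
variable {V : Type*} [NormedAddCommGroup V] [InnerProductSpace ℝ V]
variable {U : Set V} {f g : V → ℝ} {x : V}

lemma one_le_inf : (1 : WithTop ℕ∞) ≤ ((⊤:ℕ∞) : WithTop ℕ∞) := by exact_mod_cast le_top
lemma two_le_inf : (1 + 1 : WithTop ℕ∞) ≤ ((⊤:ℕ∞) : WithTop ℕ∞) := by
  have : ((1+1 : ℕ∞) : WithTop ℕ∞) ≤ ((⊤:ℕ∞) : WithTop ℕ∞) := by exact_mod_cast le_top
  simpa using this

lemma fderiv_real_apply {g : ℝ → ℝ} {a v : ℝ} : fderiv ℝ g a v = v * deriv g a := by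
  have h : fderiv ℝ g a v = fderiv ℝ g a (v • (1:ℝ)) := by norm_num
  rw [h, map_smul, fderiv_apply_one_eq_deriv]; simp

lemma my_diffAt (hU : IsOpen U) (hf : ContDiffOn ℝ (⊤:ℕ∞) f U) (hx : x ∈ U) :
    DifferentiableAt ℝ f x :=
  (hf.contDiffAt (hU.mem_nhds hx)).differentiableAt (by simp)

lemma my_diffAt_fderiv (hU : IsOpen U) (hf : ContDiffOn ℝ (⊤:ℕ∞) f U) (hx : x ∈ U) :
    DifferentiableAt ℝ (fderiv ℝ f) x := by
  have h := (hf.contDiffAt (hU.mem_nhds hx)).fderiv_right (m := 1) two_le_inf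
  exact h.differentiableAt one_ne_zero

lemma fderiv2_add (hU : IsOpen U) (hf : ContDiffOn ℝ (⊤:ℕ∞) f U)
    (hg : ContDiffOn ℝ (⊤:ℕ∞) g U) (hx : x ∈ U) :
    fderiv ℝ (fderiv ℝ (fun y => f y + g y)) x
      = fderiv ℝ (fun y => fderiv ℝ f y + fderiv ℝ g y) x := by
  have h1 : fderiv ℝ (fun y => f y + g y) =ᶠ[𝓝 x] fun y => fderiv ℝ f y + fderiv ℝ g y := by
    filter_upwards [hU.mem_nhds hx] with y hy
    exact fderiv_add (my_diffAt hU hf hy) (my_diffAt hU hg hy)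
  exact h1.fderiv_eq

lemma fderiv2_add_apply (hU : IsOpen U) (hf : ContDiffOn ℝ (⊤:ℕ∞) f U)
    (hg : ContDiffOn ℝ (⊤:ℕ∞) g U) (hx : x ∈ U) (e : V) :
    fderiv ℝ (fderiv ℝ (fun y => f y + g y)) x e e
      = fderiv ℝ (fderiv ℝ f) x e e + fderiv ℝ (fderiv ℝ g) x e e := by
  rw [fderiv2_add hU hf hg hx,
    fderiv_fun_add (my_diffAt_fderiv hU hf hx) (my_diffAt_fderiv hU hg hx)]
  rfl

lemma fderiv2_sub_const (c : ℝ) :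
    fderiv ℝ (fderiv ℝ (fun y => f y - c)) x = fderiv ℝ (fderiv ℝ f) x := by
  have : fderiv ℝ (fun y => f y - c) = fderiv ℝ f := by
    funext y; exact fderiv_sub_const c
  rw [this]

lemma fderiv2_comp_apply (hU : IsOpen U) {χ : ℝ → ℝ} (hχ : ContDiff ℝ (⊤:ℕ∞) χ)
    (hf : ContDiffOn ℝ (⊤:ℕ∞) f U) (hx : x ∈ U) (e : V) :
    fderiv ℝ (fderiv ℝ (χ ∘ f)) x e e
      = deriv (deriv χ) (f x) * (fderiv ℝ f x e)^2
        + deriv χ (f x) * fderiv ℝ (fderiv ℝ f) x e e := by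
  have hχ' : ContDiff ℝ (⊤:ℕ∞) (deriv χ) := (contDiff_infty_iff_deriv.mp hχ).2
  have h1 : fderiv ℝ (χ ∘ f) =ᶠ[𝓝 x] fun y => deriv χ (f y) • fderiv ℝ f y := by
    filter_upwards [hU.mem_nhds hx] with y hy
    have hdf := my_diffAt hU hf hy
    have : fderiv ℝ (χ ∘ f) y = (fderiv ℝ χ (f y)).comp (fderiv ℝ f y) :=
      fderiv_comp y (hχ.differentiable (by simp) (f y)) hdf
    rw [this]
    ext v
    simp [fderiv_apply_one_eq_deriv, mul_comm]
  rw [h1.fderiv_eq]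
  have hc : DifferentiableAt ℝ (fun y => deriv χ (f y)) x :=
    (hχ'.differentiable (by simp) (f x)).comp x (my_diffAt hU hf hx)
  have hL : DifferentiableAt ℝ (fderiv ℝ f) x := my_diffAt_fderiv hU hf hx
  rw [fderiv_fun_smul hc hL]
  have hcx : fderiv ℝ (fun y => deriv χ (f y)) x e = deriv (deriv χ) (f x) * fderiv ℝ f x e := by
    have : fderiv ℝ (deriv χ ∘ f) x = (fderiv ℝ (deriv χ) (f x)).comp (fderiv ℝ f x) :=
      fderiv_comp x (hχ'.differentiable (by simp) (f x)) (my_diffAt hU hf hx)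
    have h2 : fderiv ℝ (fun y => deriv χ (f y)) x e
        = fderiv ℝ (deriv χ) (f x) (fderiv ℝ f x e) := by
      rw [show (fun y => deriv χ (f y)) = deriv χ ∘ f from rfl, this]; rfl
    rw [h2, fderiv_real_apply]
    ring
  simp only [ContinuousLinearMap.add_apply, ContinuousLinearMap.coe_smul',
    Pi.smul_apply, ContinuousLinearMap.smulRight_apply, smul_eq_mul]
  rw [hcx]
  ring

end Calc

section Psh
variable {V : Type*} [NormedAddCommGroup V] [InnerProductSpace ℝ V]
variable {U : Set V} {f g : V → ℝ} {x : V}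
variable {p : ℕ} {φ : V [⋀^Fin p]→ₗ[ℝ] ℝ}

lemma PshOn.add (hU : IsOpen U) (hf : PshOn φ U f) (hg : PshOn φ U g) :
    PshOn φ U (fun y => f y + g y) := by
  refine ⟨hf.1.add hg.1, fun x hx e he hφ => ?_⟩
  have : ∀ j, fderiv ℝ (fderiv ℝ (fun y => f y + g y)) x (e j) (e j)
      = fderiv ℝ (fderiv ℝ f) x (e j) (e j) + fderiv ℝ (fderiv ℝ g) x (e j) (e j) :=
    fun j => fderiv2_add_apply hU hf.1 hg.1 hx (e j)
  simp only [this, Finset.sum_add_distrib]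
  exact add_nonneg (hf.2 x hx e he hφ) (hg.2 x hx e he hφ)

lemma PshOn.const (c : ℝ) : PshOn φ U (fun _ => c) := by
  refine ⟨contDiffOn_const, fun x hx e he hφ => ?_⟩
  have h1 : (fderiv ℝ (fun _ : V => c)) = fun _ => 0 := by
    funext y; exact fderiv_const_apply c
  rw [h1]
  have h2 : (fderiv ℝ (fun _ : V => (0 : V →L[ℝ] ℝ))) = fun _ => 0 := by
    funext y; exact fderiv_const_apply 0
  rw [h2]
  simp

lemma PshOn.sub_const (hf : PshOn φ U f) (c : ℝ) : PshOn φ U (fun y => f y - c) := by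
  refine ⟨hf.1.sub contDiffOn_const, fun x hx e he hφ => ?_⟩
  have : ∀ j, fderiv ℝ (fderiv ℝ (fun y => f y - c)) x (e j) (e j)
      = fderiv ℝ (fderiv ℝ f) x (e j) (e j) := fun j => by rw [fderiv2_sub_const]
  simp only [this]
  exact hf.2 x hx e he hφ

lemma PshOn.const_smul (hU : IsOpen U) {a : ℝ} (ha : 0 ≤ a) (hf : PshOn φ U f) :
    PshOn φ U (fun y => a • f y) := by
  refine ⟨hf.1.const_smul a, fun x hx e he hφ => ?_⟩
  have h1 : fderiv ℝ (fun y => a • f y) =ᶠ[𝓝 x] fun y => a • fderiv ℝ f y := by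
    filter_upwards [hU.mem_nhds hx] with y hy
    exact fderiv_const_smul (my_diffAt hU hf.1 hy) a
  have h2 : ∀ j, fderiv ℝ (fderiv ℝ (fun y => a • f y)) x (e j) (e j)
      = a * fderiv ℝ (fderiv ℝ f) x (e j) (e j) := by
    intro j
    rw [h1.fderiv_eq, fderiv_fun_const_smul (my_diffAt_fderiv hU hf.1 hx) a]
    simp
  simp only [h2, ← Finset.mul_sum]
  exact mul_nonneg ha (hf.2 x hx e he hφ)

lemma PshOn.sum {ι : Type*} (hU : IsOpen U) (s : Finset ι) (g : ι → V → ℝ)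
    (h : ∀ i ∈ s, PshOn φ U (g i)) : PshOn φ U (fun y => ∑ i ∈ s, g i y) := by
  classical
  induction s using Finset.induction_on with
  | empty => simpa using PshOn.const (φ := φ) (U := U) 0
  | insert a s hni ih =>
    simp only [Finset.sum_insert hni]
    exact PshOn.add hU (h a (Finset.mem_insert_self a s))
      (ih fun i hi => h i (Finset.mem_insert_of_mem hi))

lemma PshOn.comp (hU : IsOpen U) {χ : ℝ → ℝ} (hχ : ContDiff ℝ (⊤:ℕ∞) χ)
    (h1 : ∀ t, 0 ≤ deriv χ t) (h2 : ∀ t, 0 ≤ deriv (deriv χ) t)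
    (hf : PshOn φ U f) : PshOn φ U (χ ∘ f) := by
  refine ⟨hχ.comp_contDiffOn hf.1, fun x hx e he hφ => ?_⟩
  have key : ∀ j, fderiv ℝ (fderiv ℝ (χ ∘ f)) x (e j) (e j)
      = deriv (deriv χ) (f x) * (fderiv ℝ f x (e j))^2
        + deriv χ (f x) * fderiv ℝ (fderiv ℝ f) x (e j) (e j) :=
    fun j => fderiv2_comp_apply hU hχ hf.1 hx (e j)
  simp only [key, Finset.sum_add_distrib, ← Finset.mul_sum]
  have t1 : 0 ≤ deriv (deriv χ) (f x) * ∑ j, (fderiv ℝ f x (e j))^2 :=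
    mul_nonneg (h2 _) (Finset.sum_nonneg fun j _ => sq_nonneg _)
  have t2 : 0 ≤ deriv χ (f x) * ∑ j, fderiv ℝ (fderiv ℝ f) x (e j) (e j) :=
    mul_nonneg (h1 _) (hf.2 x hx e he hφ)
  linarith

lemma inner_self_fderiv2 (x e : V) :
    fderiv ℝ (fderiv ℝ (fun y : V => ⟪y, y⟫)) x e e = 2 * ⟪e, e⟫ := by
  have h1 : (fderiv ℝ (fun y : V => ⟪y, y⟫))
      = ⇑(2 • (innerSL ℝ : V →L[ℝ] V →L[ℝ] ℝ)) := by
    funext y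
    ext v
    rw [fderiv_inner_apply (𝕜 := ℝ) differentiableAt_fun_id differentiableAt_fun_id v]
    simp [real_inner_comm]
    ring
  rw [h1, ContinuousLinearMap.fderiv]
  simp [real_inner_comm]
  exact real_inner_self_eq_norm_sq e

lemma pshOn_inner_self : PshOn φ U (fun y : V => ⟪y, y⟫) := by
  refine ⟨(contDiff_id.inner ℝ contDiff_id).contDiffOn, fun x hx e he hφ => ?_⟩
  have : ∀ j, fderiv ℝ (fderiv ℝ (fun y : V => ⟪y, y⟫)) x (e j) (e j) = 2 * ⟪e j, e j⟫ :=
    fun j => inner_self_fderiv2 x (e j)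
  simp only [this]
  refine Finset.sum_nonneg fun j _ => mul_nonneg (by norm_num) real_inner_self_nonneg

end Psh

section Chi
open intervalIntegral

noncomputable def chiD (δ : ℝ) : ℝ → ℝ := fun t => ∫ s in (0:ℝ)..t, expNegInvGlue (s - δ)

noncomputable def chi (δ : ℝ) : ℝ → ℝ := fun t => ∫ s in (0:ℝ)..t, chiD δ s

lemma chiD_cont_integrand (δ : ℝ) : Continuous fun s => expNegInvGlue (s - δ) :=
  (expNegInvGlue.contDiff (n := (⊤:ℕ∞))).continuous.comp (continuous_id.sub continuous_const)

lemma chiD_hasDerivAt (δ t : ℝ) : HasDerivAt (chiD δ) (expNegInvGlue (t - δ)) t :=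
  ((chiD_cont_integrand δ).integral_hasStrictDerivAt 0 t).hasDerivAt

lemma chiD_deriv (δ : ℝ) : deriv (chiD δ) = fun t => expNegInvGlue (t - δ) :=
  funext fun t => (chiD_hasDerivAt δ t).deriv

lemma chiD_differentiable (δ : ℝ) : Differentiable ℝ (chiD δ) :=
  fun t => (chiD_hasDerivAt δ t).differentiableAt

lemma chiD_contDiff (δ : ℝ) : ContDiff ℝ (⊤:ℕ∞) (chiD δ) := by
  rw [show (((⊤:ℕ∞)) : WithTop ℕ∞) = ∞ from rfl, contDiff_infty_iff_deriv]
  refine ⟨chiD_differentiable δ, ?_⟩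
  rw [chiD_deriv]
  exact (expNegInvGlue.contDiff (n := (⊤:ℕ∞))).comp (contDiff_id.sub contDiff_const)

lemma chiD_cont (δ : ℝ) : Continuous (chiD δ) := (chiD_contDiff δ).continuous

lemma chiD_eq_zero {δ t : ℝ} (hδ : 0 < δ) (ht : t ≤ δ) : chiD δ t = 0 := by
  have h : Set.EqOn (fun s => expNegInvGlue (s - δ)) (fun _ => (0:ℝ)) (Set.uIcc 0 t) := by
    intro s hs
    have hs' : s ≤ δ := by
      rcases Set.mem_uIcc.mp hs with ⟨_, h2⟩ | ⟨_, h2⟩ <;> linarith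
    exact expNegInvGlue.zero_of_nonpos (by linarith)
  unfold chiD
  rw [integral_congr h, integral_const]
  simp

lemma chiD_nonneg {δ : ℝ} (hδ : 0 < δ) (t : ℝ) : 0 ≤ chiD δ t := by
  rcases le_or_gt t δ with h | h
  · rw [chiD_eq_zero hδ h]
  · exact integral_nonneg (by linarith) fun u _ => expNegInvGlue.nonneg _

lemma chiD_pos {δ t : ℝ} (hδ : 0 < δ) (ht : δ < t) : 0 < chiD δ t := by
  have hsplit : chiD δ δ + (∫ s in δ..t, expNegInvGlue (s - δ)) = chiD δ t :=
    integral_add_adjacent_intervals ((chiD_cont_integrand δ).intervalIntegrable _ _)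
      ((chiD_cont_integrand δ).intervalIntegrable _ _)
  have hpos : 0 < ∫ s in δ..t, expNegInvGlue (s - δ) :=
    intervalIntegral_pos_of_pos_on ((chiD_cont_integrand δ).intervalIntegrable _ _)
      (fun s hs => expNegInvGlue.pos_of_pos (by have := hs.1; linarith)) ht
  have h0 : chiD δ δ = 0 := chiD_eq_zero hδ le_rfl
  linarith

lemma chi_hasDerivAt (δ t : ℝ) : HasDerivAt (chi δ) (chiD δ t) t :=
  ((chiD_cont δ).integral_hasStrictDerivAt 0 t).hasDerivAt

lemma chi_deriv (δ : ℝ) : deriv (chi δ) = chiD δ :=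
  funext fun t => (chi_hasDerivAt δ t).deriv

lemma chi_differentiable (δ : ℝ) : Differentiable ℝ (chi δ) :=
  fun t => (chi_hasDerivAt δ t).differentiableAt

lemma chi_contDiff (δ : ℝ) : ContDiff ℝ (⊤:ℕ∞) (chi δ) := by
  rw [show (((⊤:ℕ∞)) : WithTop ℕ∞) = ∞ from rfl, contDiff_infty_iff_deriv]
  exact ⟨chi_differentiable δ, by rw [chi_deriv]; exact chiD_contDiff δ⟩

lemma chi_deriv_nonneg {δ : ℝ} (hδ : 0 < δ) (t : ℝ) : 0 ≤ deriv (chi δ) t := by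
  rw [chi_deriv]; exact chiD_nonneg hδ t

lemma chi_deriv2_nonneg {δ : ℝ} (t : ℝ) : 0 ≤ deriv (deriv (chi δ)) t := by
  rw [chi_deriv, chiD_deriv]; exact expNegInvGlue.nonneg _

lemma chi_eq_zero {δ t : ℝ} (hδ : 0 < δ) (ht : t ≤ δ) : chi δ t = 0 := by
  have h : Set.EqOn (chiD δ) (fun _ => (0:ℝ)) (Set.uIcc 0 t) := by
    intro s hs
    have hs' : s ≤ δ := by
      rcases Set.mem_uIcc.mp hs with ⟨_, h2⟩ | ⟨_, h2⟩ <;> linarith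
    exact chiD_eq_zero hδ hs'
  unfold chi
  rw [integral_congr h, integral_const]
  simp

lemma chi_nonneg {δ : ℝ} (hδ : 0 < δ) (t : ℝ) : 0 ≤ chi δ t := by
  rcases le_or_gt t δ with h | h
  · rw [chi_eq_zero hδ h]
  · exact integral_nonneg (by linarith) fun u _ => chiD_nonneg hδ _

lemma chi_monotone {δ : ℝ} (hδ : 0 < δ) : Monotone (chi δ) :=
  monotone_of_deriv_nonneg (chi_differentiable δ) (chi_deriv_nonneg hδ)

lemma chi_pos_at_two {δ : ℝ} (hδ : 0 < δ) : 0 < chi δ (2 * δ) := by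
  have hsplit : chi δ δ + (∫ s in δ..(2*δ), chiD δ s) = chi δ (2*δ) :=
    integral_add_adjacent_intervals ((chiD_cont δ).intervalIntegrable _ _)
      ((chiD_cont δ).intervalIntegrable _ _)
  have hpos : 0 < ∫ s in δ..(2*δ), chiD δ s :=
    intervalIntegral_pos_of_pos_on ((chiD_cont δ).intervalIntegrable _ _)
      (fun s hs => chiD_pos hδ hs.1) (by linarith)
  have h0 : chi δ δ = 0 := chi_eq_zero hδ le_rfl
  linarith

end Chi

section Hull
variable {V : Type*} [NormedAddCommGroup V] [InnerProductSpace ℝ V]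
variable {U : Set V} {x : V}
variable {p : ℕ} {φ : V [⋀^Fin p]→ₗ[ℝ] ℝ}

lemma exists_sep (hU : IsOpen U) {D : Set V} (hD : IsCompact D) (hDU : D ⊆ U)
    (hx : x ∈ U) (hxh : x ∉ PshHull φ U D) :
    ∃ v : V → ℝ, PshOn φ U v ∧ 0 < v x ∧ ∀ y ∈ D, v y < 0 := by
  simp only [PshHull, Set.mem_setOf_eq, not_and, not_forall] at hxh
  obtain ⟨f, hf, hlt⟩ := hxh hx
  push_neg at hlt
  set M := sSup (f '' D) with hM
  set r := (f x - M) / 2 with hr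
  have hrpos : 0 < r := by simp only [hr]; linarith
  have hbdd : BddAbove (f '' D) := (hD.image_of_continuousOn (hf.1.continuousOn.mono hDU)).bddAbove
  refine ⟨fun y => f y - (M + r), ?_, by simpa using by linarith, fun y hy => ?_⟩
  · exact hf.sub_const (M + r)
  · have : f y ≤ M := le_csSup hbdd (Set.mem_image_of_mem f hy)
    simp only []
    linarith

lemma exists_bump (hU : IsOpen U) {A D : Set V} (hA : IsCompact A) (hAU : A ⊆ U)
    (hD : IsCompact D) (hDU : D ⊆ U) (hsep : ∀ x ∈ A, x ∉ PshHull φ U D)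
    (c : ℝ) (hc : 0 ≤ c) :
    ∃ T : V → ℝ, PshOn φ U T ∧ (∀ y, 0 ≤ T y) ∧ (∀ y ∈ D, T y = 0) ∧ ∀ y ∈ A, c ≤ T y := by
  classical
  have hsel : ∀ x : A, ∃ v : V → ℝ, PshOn φ U v ∧ 0 < v x ∧ ∀ y ∈ D, v y < 0 :=
    fun x => exists_sep hU hD hDU (hAU x.2) (hsep x x.2)
  choose v hv1 hv2 hv3 using hsel
  set t : A → ℝ := fun i => v i i / 2 with ht
  have htpos : ∀ i, 0 < t i := fun i => by have := hv2 i; simp only [ht]; linarith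
  set W : A → Set V := fun i => U ∩ (v i) ⁻¹' (Set.Ioi (t i)) with hW
  have hWo : ∀ i, IsOpen (W i) := fun i =>
    (hv1 i).1.continuousOn.isOpen_inter_preimage hU isOpen_Ioi
  have hcov : A ⊆ ⋃ i, W i := by
    intro x hx
    refine Set.mem_iUnion.mpr ⟨⟨x, hx⟩, hAU hx, ?_⟩
    have := htpos ⟨x, hx⟩
    simp only [Set.mem_preimage, Set.mem_Ioi]
    simp only [ht] at this ⊢
    linarith
  obtain ⟨s, hs⟩ := hA.elim_finite_subcover W hWo hcov
  set δ : A → ℝ := fun i => t i / 2 with hδ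
  have hδpos : ∀ i, 0 < δ i := fun i => by have := htpos i; simp only [hδ]; linarith
  set m : A → ℝ := fun i => chi (δ i) (t i) with hm
  have hmpos : ∀ i, 0 < m i := fun i => by
    have := chi_pos_at_two (hδpos i)
    simpa [hm, hδ, mul_comm, mul_div_assoc] using by
      have h2 : 2 * δ i = t i := by simp [hδ]; ring
      rw [h2] at this; exact this
  set g : A → V → ℝ := fun i y => (c / m i) • chi (δ i) (v i y) with hg
  have hgpsh : ∀ i, PshOn φ U (g i) := by
    intro i
    have hcomp : PshOn φ U (chi (δ i) ∘ v i) :=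
      PshOn.comp hU (chi_contDiff (δ i)) (chi_deriv_nonneg (hδpos i))
        (fun u => chi_deriv2_nonneg u) (hv1 i)
    exact PshOn.const_smul hU (div_nonneg hc (hmpos i).le) hcomp
  have hgnn : ∀ i y, 0 ≤ g i y := fun i y =>
    smul_nonneg (div_nonneg hc (hmpos i).le) (chi_nonneg (hδpos i) _)
  refine ⟨fun y => ∑ i ∈ s, g i y, PshOn.sum hU s g (fun i _ => hgpsh i), ?_, ?_, ?_⟩
  · exact fun y => Finset.sum_nonneg fun i _ => hgnn i y
  · intro y hy
    refine Finset.sum_eq_zero fun i _ => ?_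
    have : v i y < 0 := hv3 i y hy
    simp only [hg, chi_eq_zero (hδpos i) (le_trans this.le (hδpos i).le), smul_zero]
  · intro y hy
    obtain ⟨i, his, hiW⟩ := Set.mem_iUnion₂.mp (hs hy)
    have hvy : t i < v i y := hiW.2
    have hchige : m i ≤ chi (δ i) (v i y) := chi_monotone (hδpos i) hvy.le
    have hterm : c ≤ g i y := by
      have : c / m i * m i ≤ c / m i * chi (δ i) (v i y) :=
        mul_le_mul_of_nonneg_left hchige (div_nonneg hc (hmpos i).le)
      have hcm : c / m i * m i = c := div_mul_cancel₀ c (hmpos i).ne'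
      simpa [hg, smul_eq_mul, hcm] using this
    calc c ≤ g i y := hterm
    _ ≤ ∑ i ∈ s, g i y := Finset.single_le_sum (fun j _ => hgnn j y) his

end Hull

section Hull2
variable {V : Type*} [NormedAddCommGroup V] [InnerProductSpace ℝ V]
variable {U : Set V}
variable {p : ℕ} {φ : V [⋀^Fin p]→ₗ[ℝ] ℝ}

lemma hull_subset_U {K : Set V} : PshHull φ U K ⊆ U := fun _ hx => hx.1

lemma subset_hull {D : Set V} (hD : IsCompact D) (hDU : D ⊆ U) : D ⊆ PshHull φ U D := by
  intro x hx
  refine ⟨hDU hx, fun f hf => ?_⟩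
  exact le_csSup (hD.image_of_continuousOn (hf.1.continuousOn.mono hDU)).bddAbove
    (Set.mem_image_of_mem f hx)

lemma isCompact_of_closure_cond (hU : IsOpen U) {S C : Set V} (hC : IsCompact C)
    (hCU : C ⊆ U) (hsub : S ⊆ C)
    (hloc : ∀ x ∈ closure S, x ∈ U → x ∈ S) : IsCompact S := by
  refine IsCompact.of_isClosed_subset hC ?_ hsub
  rw [← closure_eq_iff_isClosed]
  apply Set.Subset.antisymm _ subset_closure
  intro x hx
  have hxC : x ∈ C := hC.isClosed.closure_subset ((closure_mono hsub) hx)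
  exact hloc x hx (hCU hxC)

lemma my_le_on_closure {f : V → ℝ} (hU : IsOpen U) (hf : ContinuousOn f U) {S : Set V} {c : ℝ}
    (hfS : ∀ y ∈ S, f y ≤ c) {x : V} (hx : x ∈ closure S) (hxU : x ∈ U) : f x ≤ c := by
  have hne : (𝓝[S] x).NeBot := mem_closure_iff_nhdsWithin_neBot.mp hx
  have hten : Filter.Tendsto f (𝓝[S] x) (𝓝 (f x)) :=
    ((hf.continuousAt (hU.mem_nhds hxU)).continuousWithinAt).tendsto
  exact le_of_tendsto hten (Filter.eventually_iff_exists_mem.mpr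
    ⟨S, self_mem_nhdsWithin, hfS⟩)

lemma isCompact_hull_of_subset (hU : IsOpen U) {K C : Set V} (hC : IsCompact C)
    (hCU : C ⊆ U) (hsub : PshHull φ U K ⊆ C) : IsCompact (PshHull φ U K) := by
  refine isCompact_of_closure_cond hU hC hCU hsub fun x hx hxU => ?_
  refine ⟨hxU, fun f hf => ?_⟩
  exact my_le_on_closure hU hf.1.continuousOn (fun y hy => hy.2 f hf) hx hxU

lemma isCompact_sublevel_of_subset (hU : IsOpen U) {f : V → ℝ} (hf : ContinuousOn f U)
    {C : Set V} (hC : IsCompact C) (hCU : C ⊆ U) {c : ℝ}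
    (hsub : {x ∈ U | f x ≤ c} ⊆ C) : IsCompact {x ∈ U | f x ≤ c} := by
  refine isCompact_of_closure_cond hU hC hCU hsub fun x hx hxU => ?_
  exact ⟨hxU, my_le_on_closure hU hf (fun y hy => hy.2) hx hxU⟩

end Hull2

section Exh
variable {V : Type*} [NormedAddCommGroup V] [InnerProductSpace ℝ V] [FiniteDimensional ℝ V]
variable {U : Set V}
variable {p : ℕ} {φ : V [⋀^Fin p]→ₗ[ℝ] ℝ}

lemma exists_exhaustion (hU : IsOpen U)
    (hhull : ∀ K : Set V, K ⊆ U → IsCompact K → IsCompact (PshHull φ U K)) :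
    ∃ C : ℕ → Set V, (∀ n, IsCompact (C n)) ∧ (∀ n, C n ⊆ U) ∧
      (∀ n, PshHull φ U (C n) ⊆ interior (C (n+1))) ∧ (∀ x ∈ U, ∃ n, x ∈ C n) ∧
      (∀ n, C n ⊆ C (n+1)) := by
  classical
  set E : ℕ → Set V := fun n =>
    Metric.closedBall 0 n ∩ {x | ∀ y, y ∉ U → 1 / ((n : ℝ) + 1) ≤ dist x y} with hE
  have hEclosed : ∀ n, IsClosed (E n) := by
    intro n
    refine Metric.isClosed_closedBall.inter ?_
    have : {x : V | ∀ y, y ∉ U → 1 / ((n : ℝ) + 1) ≤ dist x y}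
        = ⋂ y ∈ Uᶜ, {x | 1 / ((n : ℝ) + 1) ≤ dist x y} := by
      ext x; simp [Set.mem_iInter]
    rw [this]
    exact isClosed_biInter fun y _ =>
      isClosed_le continuous_const (continuous_id.dist continuous_const)
  have hEcompact : ∀ n, IsCompact (E n) := fun n =>
    (isCompact_closedBall 0 n).of_isClosed_subset (hEclosed n)
      Set.inter_subset_left
  have hEsubU : ∀ n, E n ⊆ U := by
    intro n x hx
    by_contra hxU
    have := hx.2 x hxU
    simp at this
    have : (0:ℝ) < 1 / ((n : ℝ) + 1) := by positivity
    linarith [hx.2 x hxU, dist_self x]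
  have hEcov : ∀ x ∈ U, ∃ n, x ∈ E n := by
    intro x hx
    obtain ⟨ε, hε, hball⟩ := Metric.isOpen_iff.mp hU x hx
    obtain ⟨n1, hn1⟩ := exists_nat_ge ‖x‖
    obtain ⟨n2, hn2⟩ := exists_nat_one_div_lt hε
    refine ⟨max n1 n2, ?_, ?_⟩
    · simp only [Metric.mem_closedBall, dist_zero_right]
      exact hn1.trans (by exact_mod_cast Nat.le_max_left n1 n2)
    · intro y hyU
      by_contra hlt
      push_neg at hlt
      have h1 : 1 / ((max n1 n2 : ℕ) + 1 : ℝ) ≤ 1 / ((n2 : ℝ) + 1) := by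
        apply one_div_le_one_div_of_le (by positivity)
        have : (n2 : ℝ) ≤ (max n1 n2 : ℕ) := by exact_mod_cast Nat.le_max_right n1 n2
        linarith
      have : dist x y < ε := lt_of_lt_of_le hlt (h1.trans hn2.le)
      exact hyU (hball (by simpa [Metric.mem_ball, dist_comm] using this))
  have step : ∀ (n : ℕ) (D : Set V), IsCompact D → D ⊆ U →
      ∃ D' : Set V, IsCompact D' ∧ D' ⊆ U ∧ PshHull φ U D ∪ E n ⊆ interior D' := by
    intro n D hD hDU
    have hK : IsCompact (PshHull φ U D ∪ E n) := (hhull D hDU hD).union (hEcompact n)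
    have hKU : PshHull φ U D ∪ E n ⊆ U := Set.union_subset hull_subset_U (hEsubU n)
    obtain ⟨L, hL, hKL, hLU⟩ := exists_compact_between hK hU hKU
    exact ⟨L, hL, hLU, hKL⟩
  choose F hF1 hF2 hF3 using step
  let g : ℕ → {D : Set V // IsCompact D ∧ D ⊆ U} := fun n =>
    Nat.rec ⟨∅, isCompact_empty, Set.empty_subset U⟩
      (fun n ih => ⟨F n ih.1 ih.2.1 ih.2.2, hF1 n ih.1 ih.2.1 ih.2.2,
        hF2 n ih.1 ih.2.1 ih.2.2⟩) n
  have hgsucc : ∀ n, PshHull φ U (g n).1 ∪ E n ⊆ interior (g (n+1)).1 :=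
    fun n => hF3 n (g n).1 (g n).2.1 (g n).2.2
  refine ⟨fun n => (g n).1, fun n => (g n).2.1, fun n => (g n).2.2, ?_, ?_, ?_⟩
  · exact fun n => (Set.union_subset_iff.mp (hgsucc n)).1
  · intro x hx
    obtain ⟨n, hn⟩ := hEcov x hx
    exact ⟨n + 1, interior_subset ((hgsucc n) (Set.mem_union_right _ hn))⟩
  · intro n
    exact (subset_hull (g n).2.1 (g n).2.2).trans
      (((Set.union_subset_iff.mp (hgsucc n)).1).trans interior_subset)

end Exh

/-- **Theorem 3.8** (Harvey–Lawson), Euclidean parallel case.  `U` is strictly `φ`-convex at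
infinity (hulls of compacts are compact and there is a function strictly `φ`-plurisubharmonic
outside a compact subset) iff there exists a smooth `φ`-plurisubharmonic proper exhaustion
function which is strictly `φ`-plurisubharmonic outside a compact subset. -/
theorem strictlyPhiConvexAtInfinity_iff
    {V : Type*} [NormedAddCommGroup V] [InnerProductSpace ℝ V]
    [FiniteDimensional ℝ V] {p : ℕ} (hp : 1 ≤ p)
    (φ : V [⋀^Fin p]→ₗ[ℝ] ℝ)
    (hcomass : ∀ u : Fin p → V, Orthonormal ℝ u → φ u ≤ 1)
    (U : Set V) (hU : IsOpen U) :
    ((∀ K : Set V, K ⊆ U → IsCompact K → IsCompact (PshHull φ U K)) ∧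
      ∃ C : Set V, IsCompact C ∧ C ⊆ U ∧
        ∃ g : V → ℝ, ContDiffOn ℝ (⊤ : ℕ∞) g (U \ C) ∧ ∀ x ∈ U \ C, StrictAt φ g x) ↔
      ∃ f : V → ℝ, PshOn φ U f ∧ (∀ c : ℝ, IsCompact {x ∈ U | f x ≤ c}) ∧
        ∃ C' : Set V, IsCompact C' ∧ C' ⊆ U ∧ ∀ x ∈ U \ C', StrictAt φ f x := by
  classical
  constructor
  · rintro ⟨hhull, -⟩
    obtain ⟨C, hCcomp, hCU, hCint, hCcov, hCsucc⟩ := exists_exhaustion hU hhull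
    have hmono : ∀ {m n : ℕ}, m ≤ n → C m ⊆ C n := by
      intro m n h
      induction h with
      | refl => exact subset_rfl
      | step _ ih => rename_i k hk; exact ih.trans (hCsucc k)
    -- bump functions
    have hbump : ∀ n : ℕ, ∃ T : V → ℝ, PshOn φ U T ∧ (∀ y, 0 ≤ T y) ∧
        (∀ y ∈ C n, T y = 0) ∧ ∀ y ∈ C (n+2) \ interior (C (n+1)), ((n:ℝ)+1) ≤ T y := by
      intro n
      have hA : IsCompact (C (n+2) \ interior (C (n+1))) :=
        (hCcomp (n+2)).diff isOpen_interior
      have hAU : C (n+2) \ interior (C (n+1)) ⊆ U := fun y hy => hCU (n+2) hy.1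
      have hsep : ∀ x ∈ C (n+2) \ interior (C (n+1)), x ∉ PshHull φ U (C n) := by
        intro x hx hmem
        exact hx.2 (hCint n hmem)
      exact exists_bump hU hA hAU (hCcomp n) (hCU n) hsep ((n:ℝ)+1) (by positivity)
    choose T hT1 hT2 hT3 hT4 using hbump
    have hvanish : ∀ {m n : ℕ} {y : V}, y ∈ C m → m ≤ n → T n y = 0 :=
      fun {m n y} hy h => hT3 n y (hmono h hy)
    set F : V → ℝ := fun y => ⟪y, y⟫ + ∑' n, T n y with hF
    set G : ℕ → V → ℝ := fun m y => ⟪y, y⟫ + ∑ n ∈ Finset.range m, T n y with hG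
    have hGpsh : ∀ m, PshOn φ U (G m) :=
      fun m => PshOn.add hU pshOn_inner_self
        (PshOn.sum hU (Finset.range m) T (fun i _ => hT1 i))
    have hFeq : ∀ (m : ℕ) (y : V), y ∈ C m → F y = G m y := by
      intro m y hy
      have : ∑' n, T n y = ∑ n ∈ Finset.range m, T n y :=
        tsum_eq_sum (fun n hn => hvanish hy (by simpa [Finset.mem_range, not_lt] using hn))
      simp only [hF, hG, this]
    have hFev : ∀ (m : ℕ) (x : V), x ∈ interior (C m) → F =ᶠ[nhds x] G m := by
      intro m x hx
      filter_upwards [isOpen_interior.mem_nhds hx] with y hy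
      exact hFeq m y (interior_subset hy)
    have hxint : ∀ x ∈ U, ∃ m, x ∈ interior (C m) := by
      intro x hx
      obtain ⟨n, hn⟩ := hCcov x hx
      exact ⟨n + 1, hCint n (subset_hull (hCcomp n) (hCU n) hn)⟩
    have hFpsh : PshOn φ U F := by
      constructor
      · intro x hx
        obtain ⟨m, hm⟩ := hxint x hx
        have : ContDiffAt ℝ (⊤ : ℕ∞) F x :=
          (((hGpsh m).1.contDiffAt (hU.mem_nhds hx))).congr_of_eventuallyEq (hFev m x hm)
        exact this.contDiffWithinAt
      · intro x hx e he hφ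
        obtain ⟨m, hm⟩ := hxint x hx
        have h2 : ∀ j, fderiv ℝ (fderiv ℝ F) x (e j) (e j)
            = fderiv ℝ (fderiv ℝ (G m)) x (e j) (e j) := by
          intro j
          rw [((hFev m x hm).fderiv (𝕜 := ℝ)).fderiv_eq]
        simp only [h2]
        exact (hGpsh m).2 x hx e he hφ
    have hFstrict : ∀ x ∈ U, StrictAt φ F x := by
      intro x hx e he hφ
      obtain ⟨m, hm⟩ := hxint x hx
      have h2 : ∀ j, fderiv ℝ (fderiv ℝ F) x (e j) (e j)
          = fderiv ℝ (fderiv ℝ (G m)) x (e j) (e j) := by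
        intro j
        rw [((hFev m x hm).fderiv (𝕜 := ℝ)).fderiv_eq]
      have h3 : ∀ j, fderiv ℝ (fderiv ℝ (G m)) x (e j) (e j)
          = fderiv ℝ (fderiv ℝ (fun y : V => ⟪y, y⟫)) x (e j) (e j)
            + fderiv ℝ (fderiv ℝ (fun y => ∑ n ∈ Finset.range m, T n y)) x (e j) (e j) :=
        fun j => fderiv2_add_apply hU (pshOn_inner_self (φ := φ) (U := U)).1
          (PshOn.sum hU (Finset.range m) T (fun i _ => hT1 i)).1 hx (e j)
      have h4 : ∀ j, fderiv ℝ (fderiv ℝ (fun y : V => ⟪y, y⟫)) x (e j) (e j) = 2 := by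
        intro j
        rw [inner_self_fderiv2]
        have : ‖e j‖ = 1 := he.1 j
        rw [real_inner_self_eq_norm_mul_norm, this]
        norm_num
      have h5 : 0 ≤ ∑ j, fderiv ℝ (fderiv ℝ (fun y => ∑ n ∈ Finset.range m, T n y)) x
          (e j) (e j) :=
        (PshOn.sum hU (Finset.range m) T (fun i _ => hT1 i)).2 x hx e he hφ
      simp only [h2, h3, Finset.sum_add_distrib, h4, Finset.sum_const, Finset.card_univ,
        Fintype.card_fin, nsmul_eq_mul]
      have hppos : (0:ℝ) < 2 * p := by
        have : (1:ℝ) ≤ p := by exact_mod_cast hp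
        linarith
      linarith
    have hFproper : ∀ c : ℝ, IsCompact {x ∈ U | F x ≤ c} := by
      intro c
      obtain ⟨m, hm⟩ := exists_nat_ge c
      have hsub : {x ∈ U | F x ≤ c} ⊆ C (m + 1) := by
        intro x hx
        by_contra hxC
        obtain ⟨n₀, hn₀⟩ := hCcov x hx.1
        have hex : ∃ n, x ∈ C n := ⟨n₀, hn₀⟩
        set n := Nat.find hex with hn
        have hxn : x ∈ C n := Nat.find_spec hex
        have hnge : m + 2 ≤ n := by
          by_contra hlt
          push_neg at hlt
          exact hxC (hmono (by omega) hxn)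
        set k := n - 2 with hk
        have hkn : n = k + 2 := by omega
        have hxk : x ∈ C (k+2) \ interior (C (k+1)) := by
          refine ⟨hkn ▸ hxn, fun hmem => ?_⟩
          exact Nat.find_min hex (by omega) (interior_subset hmem)
        have hTk : ((k:ℝ)+1) ≤ T k x := hT4 k x hxk
        have hsummable : Summable (fun n => T n x) :=
          summable_of_ne_finset_zero (s := Finset.range n)
            (fun b hb => hvanish hxn (by simpa [Finset.mem_range, not_lt] using hb))
        have hle : T k x ≤ ∑' n, T n x := Summable.le_tsum hsummable k (fun j _ => hT2 j x)
        have hFx : F x ≤ c := hx.2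
        have hinn : (0:ℝ) ≤ ⟪x, x⟫ := real_inner_self_nonneg
        have : ((k:ℝ)+1) ≤ c := by
          simp only [hF] at hFx
          linarith
        have hkm : (m:ℝ) + 1 ≤ (k:ℝ) + 1 := by
          have : m + 1 ≤ k + 1 := by omega
          exact_mod_cast this
        linarith
      exact isCompact_sublevel_of_subset hU hFpsh.1.continuousOn (hCcomp (m+1))
        (hCU (m+1)) hsub
    exact ⟨F, hFpsh, hFproper, ∅, isCompact_empty, Set.empty_subset U,
      fun x hx => hFstrict x hx.1⟩
  · rintro ⟨f, hf, hproper, C', hC'comp, hC'U, hstrict⟩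
    refine ⟨?_, C', hC'comp, hC'U, f, hf.1.mono Set.diff_subset, hstrict⟩
    intro K hKU hKcomp
    have hsub : PshHull φ U K ⊆ {x ∈ U | f x ≤ sSup (f '' K)} :=
      fun x hx => ⟨hx.1, hx.2 f hf⟩
    exact isCompact_hull_of_subset hU (hproper (sSup (f '' K)))
      (fun x hx => hx.1) hsub
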